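/- Let Ω ⊆ ℝ^N be open, let u ∈ C²(Ω) be superharmonic (Δu ≤ 0) with u > 0 and ∇u ≠ 0 a.e. on Ω, and let β > 3. Define ω₁(x) = u(x)^{−β−1}|∇u(x)|² and ω₂(x) = u(x)^{−β+1}. Then for every Lipschitz function ξ with compact support in Ω, 3(β−3) ∫_Ω |ξ|² ω₁ dx ≤ ∫_Ω |∇ξ|² ω₂ dx. -/

import Mathlib

open MeasureTheory Real

open Metric Filter Set Topology

section IBP

variable {N : ℕ}

local notation "Err" => EuclideanSpace ℝ (Fin N)

/-- integration by parts for a Lipschitz compactly supported function against a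
C¹ function on an open neighborhood of its support. -/
lemma lipschitz_ibp (v : Err) (φ g : Err → ℝ)
    {Kφ : NNReal} (hφ : LipschitzWith Kφ φ) (hφc : HasCompactSupport φ)
    {U : Set Err} (hU : IsOpen U) (hsupp : tsupport φ ⊆ U)
    (hgm : AEStronglyMeasurable g (volume : Measure Err))
    (hg : ContDiffOn ℝ 1 g U) :
    ∫ x, fderiv ℝ φ x v * g x = - ∫ x, φ x * fderiv ℝ g x v := by
  obtain ⟨δ, δpos, hδU⟩ := hφc.exists_cthickening_subset_open hU hsupp
  set K : Set Err := tsupport φ with hK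
  set C : Set Err := cthickening δ K with hC
  have hCc : IsCompact C := hφc.cthickening
  have hCU : C ⊆ U := hδU
  have hKC : K ⊆ C := self_subset_cthickening _
  -- bounds
  obtain ⟨Mg, hMg⟩ := hCc.exists_bound_of_continuousOn (hg.continuousOn.mono hCU)
  have hMg0 : ∀ x ∈ C, ‖g x‖ ≤ max Mg 0 := fun x hx => (hMg x hx).trans (le_max_left _ _)
  have hfdc : ContinuousOn (fderiv ℝ g) U := hg.continuousOn_fderiv_of_isOpen hU le_rfl
  obtain ⟨Mg', hMg'⟩ := hCc.exists_bound_of_continuousOn (hfdc.mono hCU)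
  have hMg'0 : ∀ x ∈ C, ‖fderiv ℝ g x‖ ≤ max Mg' 0 := fun x hx => (hMg' x hx).trans (le_max_left _ _)
  obtain ⟨Mφ, hMφ⟩ := hφc.exists_bound_of_continuous hφ.continuous
  have hMφ0 : (0:ℝ) ≤ Mφ := le_trans (norm_nonneg _) (hMφ 0)
  -- integrability of indicator bounds
  have hind : ∀ M : ℝ, Integrable (C.indicator fun _ => M) (volume : Measure Err) := by
    intro M
    rw [integrable_indicator_iff hCc.measurableSet]
    exact integrableOn_const hCc.measure_lt_top.ne
  -- membership lemmas
  have hmem : ∀ {s : ℝ}, |s| * ‖v‖ ≤ δ → ∀ {x : Err}, x + s • v ∈ K → x ∈ C := by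
    intro s hs x hx
    refine mem_cthickening_of_dist_le x (x + s • v) δ K hx ?_
    rw [dist_eq_norm]
    have : ‖x - (x + s • v)‖ = |s| * ‖v‖ := by
      simp [norm_smul, Real.norm_eq_abs]
    rw [this]; exact hs
  have hmem' : ∀ {s : ℝ}, |s| * ‖v‖ ≤ δ → ∀ {x : Err}, x ∈ K → x - s • v ∈ C := by
    intro s hs x hx
    refine mem_cthickening_of_dist_le (x - s • v) x δ K hx ?_
    rw [dist_eq_norm]
    have : ‖x - s • v - x‖ = |s| * ‖v‖ := by
      simp [norm_smul, Real.norm_eq_abs]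
    rw [this]; exact hs
  have hev : ∀ᶠ s : ℝ in 𝓝[≠] 0, |s| * ‖v‖ ≤ δ := by
    have h1 : Tendsto (fun s : ℝ => |s| * ‖v‖) (𝓝 0) (𝓝 0) := by
      have hc : Continuous (fun s : ℝ => |s| * ‖v‖) :=
        continuous_abs.mul continuous_const
      have := hc.tendsto (0:ℝ)
      simpa using this
    exact (h1.eventually (eventually_le_nhds δpos)).filter_mono nhdsWithin_le_nhds
  -- difference quotient integrands
  -- DCT 1 : quotients of φ against g
  have T1 : Tendsto (fun s : ℝ => ∫ x, (s⁻¹ * (φ (x + s • v) - φ x)) * g x)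
      (𝓝[≠] (0:ℝ)) (𝓝 (∫ x, fderiv ℝ φ x v * g x)) := by
    apply tendsto_integral_filter_of_dominated_convergence
      (bound := C.indicator fun _ => (Kφ * ‖v‖) * max Mg 0)
    · filter_upwards with s
      have hc : Continuous fun x : Err => s⁻¹ * (φ (x + s • v) - φ x) :=
        continuous_const.mul ((hφ.continuous.comp (continuous_id.add continuous_const)).sub
          hφ.continuous)
      exact hc.aestronglyMeasurable.mul hgm
    · filter_upwards [hev, self_mem_nhdsWithin] with s hs hs0
      refine ae_of_all _ fun x => ?_
      by_cases hx : x ∈ C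
      · rw [Set.indicator_of_mem hx]
        have h1 : ‖φ (x + s • v) - φ x‖ ≤ Kφ * (|s| * ‖v‖) := by
          have := hφ.dist_le_mul (x + s • v) x
          rw [dist_eq_norm] at this
          simpa [dist_eq_norm, norm_smul, Real.norm_eq_abs] using this
        have hs0' : s ≠ 0 := hs0
        calc ‖s⁻¹ * (φ (x + s • v) - φ x) * g x‖
            = |s|⁻¹ * ‖φ (x + s • v) - φ x‖ * ‖g x‖ := by
              simp [norm_mul, Real.norm_eq_abs, abs_inv, mul_assoc]
          _ ≤ |s|⁻¹ * (Kφ * (|s| * ‖v‖)) * max Mg 0 := by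
              apply mul_le_mul
              · exact mul_le_mul_of_nonneg_left h1 (by positivity)
              · exact hMg0 x hx
              · exact norm_nonneg _
              · positivity
          _ = (|s|⁻¹ * |s|) * ((Kφ * ‖v‖) * max Mg 0) := by ring
          _ = (Kφ * ‖v‖) * max Mg 0 := by
              rw [inv_mul_cancel₀ (abs_ne_zero.2 hs0')]; ring
      · rw [Set.indicator_of_notMem hx]
        have hx1 : x ∉ K := fun h => hx (hKC h)
        have hx2 : x + s • v ∉ K := fun h => hx (hmem hs h)
        rw [image_eq_zero_of_notMem_tsupport hx1, image_eq_zero_of_notMem_tsupport hx2]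
        simp
    · exact hind _
    · filter_upwards [hφ.ae_differentiableAt] with x hx
      have h0 : x + (0:ℝ) • v = x := by simp
      have h1 : HasDerivAt (fun t : ℝ => x + t • v) v 0 := by
        simpa using ((hasDerivAt_id (0:ℝ)).smul_const v).const_add x
      have hψ : HasDerivAt (fun t : ℝ => φ (x + t • v)) (fderiv ℝ φ x v) 0 := by
        have hF : HasFDerivAt φ (fderiv ℝ φ x) (x + (0:ℝ) • v) := by
          rw [h0]; exact hx.hasFDerivAt
        have := hF.comp_hasDerivAt 0 h1
        simpa [Function.comp_def] using this
      have := hψ.tendsto_slope_zero.mul_const (g x)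
      refine this.congr fun s => ?_
      simp [smul_eq_mul, zero_add]
  -- middle equality for small s
  have heq : ∀ᶠ s : ℝ in 𝓝[≠] (0:ℝ),
      ∫ x, (s⁻¹ * (φ (x + s • v) - φ x)) * g x
        = ∫ x, φ x * (s⁻¹ * (g (x - s • v) - g x)) := by
    filter_upwards [hev, self_mem_nhdsWithin] with s hs hs0
    have hgs : AEStronglyMeasurable (fun x : Err => g (x - s • v)) volume := by
      have hmp : MeasurePreserving (fun x : Err => x + -(s • v)) volume volume :=
        measurePreserving_add_right volume _
      have := hgm.comp_quasiMeasurePreserving hmp.quasiMeasurePreserving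
      simpa [Function.comp_def, sub_eq_add_neg] using this
    have i1 : Integrable (fun x : Err => φ (x + s • v) * g x) volume := by
      refine (hind (Mφ * max Mg 0)).mono' ?_ (ae_of_all _ fun x => ?_)
      · exact ((hφ.continuous.comp (continuous_id.add continuous_const)).aestronglyMeasurable).mul
          hgm
      · by_cases hx : x ∈ C
        · rw [Set.indicator_of_mem hx, norm_mul]
          exact mul_le_mul (hMφ _) (hMg0 x hx) (norm_nonneg _) hMφ0
        · rw [Set.indicator_of_notMem hx]
          have hx2 : x + s • v ∉ K := fun h => hx (hmem hs h)
          rw [image_eq_zero_of_notMem_tsupport hx2]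
          simp
    have i2 : Integrable (fun x : Err => φ x * g x) volume := by
      refine (hind (Mφ * max Mg 0)).mono' (hφ.continuous.aestronglyMeasurable.mul hgm)
        (ae_of_all _ fun x => ?_)
      by_cases hx : x ∈ C
      · rw [Set.indicator_of_mem hx, norm_mul]
        exact mul_le_mul (hMφ _) (hMg0 x hx) (norm_nonneg _) hMφ0
      · rw [Set.indicator_of_notMem hx]
        have hx1 : x ∉ K := fun h => hx (hKC h)
        rw [image_eq_zero_of_notMem_tsupport hx1]
        simp
    have i3 : Integrable (fun x : Err => φ x * g (x - s • v)) volume := by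
      refine (hind (Mφ * max Mg 0)).mono' (hφ.continuous.aestronglyMeasurable.mul hgs)
        (ae_of_all _ fun x => ?_)
      by_cases hx1 : x ∈ K
      · rw [Set.indicator_of_mem (hKC hx1), norm_mul]
        exact mul_le_mul (hMφ _) (hMg0 _ (hmem' hs hx1)) (norm_nonneg _) hMφ0
      · rw [image_eq_zero_of_notMem_tsupport hx1]
        simp only [zero_mul, norm_zero]
        by_cases hx : x ∈ C
        · rw [Set.indicator_of_mem hx]; positivity
        · rw [Set.indicator_of_notMem hx]
    have htrans : ∫ x, φ (x + s • v) * g x = ∫ x, φ x * g (x - s • v) := by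
      have := integral_add_right_eq_self (μ := (volume : Measure Err))
        (fun y => φ y * g (y - s • v)) (s • v)
      simpa [add_sub_cancel_right] using this
    calc ∫ x, (s⁻¹ * (φ (x + s • v) - φ x)) * g x
        = ∫ x, s⁻¹ * (φ (x + s • v) * g x - φ x * g x) := by
          congr 1; funext x; ring
      _ = s⁻¹ * ∫ x, (φ (x + s • v) * g x - φ x * g x) := integral_const_mul _ _
      _ = s⁻¹ * ((∫ x, φ (x + s • v) * g x) - ∫ x, φ x * g x) := by
          rw [integral_sub i1 i2]
      _ = s⁻¹ * ((∫ x, φ x * g (x - s • v)) - ∫ x, φ x * g x) := by rw [htrans]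
      _ = s⁻¹ * ∫ x, (φ x * g (x - s • v) - φ x * g x) := by rw [integral_sub i3 i2]
      _ = ∫ x, s⁻¹ * (φ x * g (x - s • v) - φ x * g x) := (integral_const_mul _ _).symm
      _ = ∫ x, φ x * (s⁻¹ * (g (x - s • v) - g x)) := by
          congr 1; funext x; ring
  -- DCT 2
  have T2 : Tendsto (fun s : ℝ => ∫ x, φ x * (s⁻¹ * (g (x - s • v) - g x)))
      (𝓝[≠] (0:ℝ)) (𝓝 (∫ x, φ x * -(fderiv ℝ g x v))) := by
    apply tendsto_integral_filter_of_dominated_convergence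
      (bound := C.indicator fun _ => Mφ * (max Mg' 0 * ‖v‖))
    · filter_upwards [self_mem_nhdsWithin] with s hs0
      have hgs : AEStronglyMeasurable (fun x : Err => g (x - s • v)) volume := by
        have hmp : MeasurePreserving (fun x : Err => x + -(s • v)) volume volume :=
          measurePreserving_add_right volume _
        have := hgm.comp_quasiMeasurePreserving hmp.quasiMeasurePreserving
        simpa [Function.comp_def, sub_eq_add_neg] using this
      exact hφ.continuous.aestronglyMeasurable.mul
        ((aestronglyMeasurable_const.mul (hgs.sub hgm)))
    · filter_upwards [hev, self_mem_nhdsWithin] with s hs hs0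
      refine ae_of_all _ fun x => ?_
      by_cases hx1 : x ∈ K
      · have hball : closedBall x δ ⊆ C := fun y hy =>
          mem_cthickening_of_dist_le y x δ K hx1 (mem_closedBall.1 hy)
        have hdiff : ∀ y ∈ closedBall x δ, DifferentiableAt ℝ g y := fun y hy =>
          (hg.differentiableOn one_ne_zero).differentiableAt (hU.mem_nhds (hCU (hball hy)))
        have hbd : ∀ y ∈ closedBall x δ, ‖fderiv ℝ g y‖ ≤ max Mg' 0 := fun y hy =>
          hMg'0 y (hball hy)
        have hxm : x ∈ closedBall x δ := mem_closedBall_self δpos.le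
        have hxsv : x - s • v ∈ closedBall x δ := by
          rw [mem_closedBall, dist_eq_norm]
          have : ‖x - s • v - x‖ = |s| * ‖v‖ := by
            simp [norm_smul, Real.norm_eq_abs]
          rw [this]; exact hs
        have hmvt : ‖g (x - s • v) - g x‖ ≤ max Mg' 0 * ‖(x - s • v) - x‖ :=
          (convex_closedBall x δ).norm_image_sub_le_of_norm_fderiv_le hdiff hbd hxm hxsv
        have hnorm : ‖(x - s • v) - x‖ = |s| * ‖v‖ := by
          simp [norm_smul, Real.norm_eq_abs]
        rw [Set.indicator_of_mem (hKC hx1)]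
        have hs0' : (s:ℝ) ≠ 0 := hs0
        calc ‖φ x * (s⁻¹ * (g (x - s • v) - g x))‖
            = ‖φ x‖ * (|s|⁻¹ * ‖g (x - s • v) - g x‖) := by
              simp [norm_mul, Real.norm_eq_abs, abs_inv]
          _ ≤ Mφ * (|s|⁻¹ * (max Mg' 0 * (|s| * ‖v‖))) := by
              apply mul_le_mul (hMφ _) _ (by positivity) hMφ0
              apply mul_le_mul_of_nonneg_left _ (by positivity)
              rw [← hnorm]; exact hmvt
          _ = (|s|⁻¹ * |s|) * (Mφ * (max Mg' 0 * ‖v‖)) := by ring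
          _ = Mφ * (max Mg' 0 * ‖v‖) := by
              rw [inv_mul_cancel₀ (abs_ne_zero.2 hs0')]; ring
      · rw [image_eq_zero_of_notMem_tsupport hx1]
        simp only [zero_mul, norm_zero]
        by_cases hx : x ∈ C
        · rw [Set.indicator_of_mem hx]; positivity
        · rw [Set.indicator_of_notMem hx]
    · exact hind _
    · refine ae_of_all _ fun x => ?_
      by_cases hxU : x ∈ U
      · have hdiff : DifferentiableAt ℝ g x :=
          (hg.differentiableOn one_ne_zero).differentiableAt (hU.mem_nhds hxU)
        have h0 : x - (0:ℝ) • v = x := by simp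
        have h1 : HasDerivAt (fun t : ℝ => x - t • v) (-v) 0 := by
          simpa using ((hasDerivAt_id (0:ℝ)).smul_const v).const_sub x
        have hψ : HasDerivAt (fun t : ℝ => g (x - t • v)) (-(fderiv ℝ g x v)) 0 := by
          have hF : HasFDerivAt g (fderiv ℝ g x) (x - (0:ℝ) • v) := by
            rw [h0]; exact hdiff.hasFDerivAt
          have := hF.comp_hasDerivAt 0 h1
          simpa [Function.comp_def] using this
        have := hψ.tendsto_slope_zero.const_mul (φ x)
        refine this.congr fun s => ?_
        simp [smul_eq_mul, zero_add]
      · have hx1 : x ∉ K := fun h => hxU (hsupp h)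
        rw [image_eq_zero_of_notMem_tsupport hx1]
        simp only [zero_mul]
        exact tendsto_const_nhds
  -- combine
  have hfin := tendsto_nhds_unique (T1.congr' heq) T2
  rw [hfin]
  rw [← integral_neg]
  congr 1; funext x; ring

end IBP

/-- Divergence of a vector field on Euclidean space. -/
noncomputable def vecDiv {N : ℕ}
    (F : EuclideanSpace ℝ (Fin N) → EuclideanSpace ℝ (Fin N))
    (x : EuclideanSpace ℝ (Fin N)) : ℝ :=
  ∑ i, fderiv ℝ F x (EuclideanSpace.single i 1) i

/-- The Laplacian Δu = div(∇u). -/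
noncomputable def laplacian {N : ℕ}
    (u : EuclideanSpace ℝ (Fin N) → ℝ) (x : EuclideanSpace ℝ (Fin N)) : ℝ :=
  vecDiv (gradient u) x

set_option maxHeartbeats 1000000 in
/-- Hardy inequality generated by a positive superharmonic function u:
with ω₁ = u^{-β-1}|∇u|², ω₂ = u^{-β+1} and β > 3, one has
3(β−3) ∫ |ξ|² ω₁ ≤ ∫ |∇ξ|² ω₂ for Lipschitz ξ compactly supported in Ω. -/
theorem superharmonic_hardy (N : ℕ) (Ω : Set (EuclideanSpace ℝ (Fin N))) (hΩ : IsOpen Ω)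
    (u : EuclideanSpace ℝ (Fin N) → ℝ) (hu : ContDiffOn ℝ 2 u Ω)
    (hsuper : ∀ x ∈ Ω, laplacian u x ≤ 0)
    (hupos : ∀ x ∈ Ω, 0 < u x)
    (hgrad : ∀ᵐ x ∂(volume.restrict Ω), gradient u x ≠ 0)
    (β : ℝ) (hβ : 3 < β)
    (ξ : EuclideanSpace ℝ (Fin N) → ℝ)
    (hLip : ∃ K, LipschitzWith K ξ) (hcs : HasCompactSupport ξ)
    (hsub : tsupport ξ ⊆ Ω) :
    3 * (β - 3) * ∫ x in Ω, |ξ x| ^ 2 * ((u x) ^ (-β - 1) * ‖gradient u x‖ ^ 2)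
      ≤ ∫ x in Ω, ‖fderiv ℝ ξ x‖ ^ 2 * (u x) ^ (-β + 1) := by
  classical
  obtain ⟨Kξ, hKξ⟩ := hLip
  obtain ⟨Mξ, hMξ⟩ := hcs.exists_bound_of_continuous hKξ.continuous
  have hMξ0 : (0:ℝ) ≤ Mξ := le_trans (norm_nonneg _) (hMξ 0)
  set φ : EuclideanSpace ℝ (Fin N) → ℝ := fun x => ξ x * ξ x with hφdef
  have hφlip : LipschitzWith (2 * Real.toNNReal Mξ * Kξ) φ := by
    apply LipschitzWith.of_dist_le_mul
    intro x y
    have h1 : dist (φ x) (φ y) = |ξ x + ξ y| * |ξ x - ξ y| := by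
      rw [Real.dist_eq, ← abs_mul]; congr 1; ring
    rw [h1]
    have h2 : |ξ x - ξ y| ≤ Kξ * dist x y := by
      have := hKξ.dist_le_mul x y; rwa [Real.dist_eq] at this
    have h3 : |ξ x + ξ y| ≤ 2 * Mξ := by
      calc |ξ x + ξ y| ≤ |ξ x| + |ξ y| := abs_add_le _ _
      _ ≤ Mξ + Mξ := add_le_add (by simpa using hMξ x) (by simpa using hMξ y)
      _ = 2 * Mξ := by ring
    calc |ξ x + ξ y| * |ξ x - ξ y| ≤ (2 * Mξ) * (Kξ * dist x y) := by
          apply mul_le_mul h3 h2 (abs_nonneg _) (by positivity)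
    _ = ((2 * Real.toNNReal Mξ * Kξ : NNReal) : ℝ) * dist x y := by
          rw [NNReal.coe_mul, NNReal.coe_mul, Real.coe_toNNReal _ hMξ0]
          norm_num; ring
  have hφc : HasCompactSupport φ := hcs.mul_left
  have hφΩ : tsupport φ ⊆ Ω := le_trans (tsupport_mul_subset_left) hsub
  obtain ⟨Mφ, hMφ⟩ := hφc.exists_bound_of_continuous hφlip.continuous
  have hMφ0 : (0:ℝ) ≤ Mφ := le_trans (norm_nonneg _) (hMφ 0)
  -- smoothness infrastructure
  have hu1 : ContDiffOn ℝ 1 u Ω := hu.of_le (by norm_num)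
  have hGc1 : ContDiffOn ℝ 1 (gradient u) Ω := by
    have hfd : ContDiffOn ℝ 1 (fderiv ℝ u) Ω := hu.fderiv_of_isOpen hΩ (by norm_num)
    exact ((InnerProductSpace.toDual ℝ _).symm.contDiff.comp_contDiffOn hfd)
  have hrpow : ∀ c : ℝ, ContDiffOn ℝ 1 (fun x => u x ^ c) Ω := fun c =>
    hu1.rpow_const_of_ne (fun x hx => (hupos x hx).ne')
  set g : Fin N → EuclideanSpace ℝ (Fin N) → ℝ :=
    fun i => Ω.indicator (fun x => u x ^ (-β) * gradient u x i) with hgdef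
  have hfC1 : ∀ i, ContDiffOn ℝ 1 (fun x => u x ^ (-β) * gradient u x i) Ω := fun i =>
    (hrpow (-β)).mul
      (((EuclideanSpace.proj i : EuclideanSpace ℝ (Fin N) →L[ℝ] ℝ).contDiff.comp_contDiffOn
        hGc1).congr (fun x _ => rfl))
  have hgC1 : ∀ i, ContDiffOn ℝ 1 (g i) Ω := fun i =>
    (hfC1 i).congr (fun x hx => Set.indicator_of_mem hx _)
  have hgm : ∀ i, AEStronglyMeasurable (g i) volume := fun i =>
    (aestronglyMeasurable_indicator_iff hΩ.measurableSet).2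
      ((hfC1 i).continuousOn.aestronglyMeasurable hΩ.measurableSet)
  have hibp : ∀ i, ∫ x, fderiv ℝ φ x (EuclideanSpace.single i 1) * g i x
      = - ∫ x, φ x * fderiv ℝ (g i) x (EuclideanSpace.single i 1) := fun i =>
    lipschitz_ibp _ φ (g i) hφlip hφc hΩ hφΩ (hgm i) (hgC1 i)
  -- pointwise facts
  have hfdu : ∀ (x w : EuclideanSpace ℝ (Fin N)), fderiv ℝ u x w = inner ℝ (gradient u x) w := by
    intro x w; rw [gradient, InnerProductSpace.toDual_symm_apply]
  have hgradcoord : ∀ (x : EuclideanSpace ℝ (Fin N)) (i : Fin N),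
      fderiv ℝ u x (EuclideanSpace.single i 1) = gradient u x i := by
    intro x i
    rw [hfdu, EuclideanSpace.inner_single_right]
    simp
  have hgfd : ∀ i, ∀ x ∈ Ω, fderiv ℝ (g i) x (EuclideanSpace.single i 1)
      = u x ^ (-β) * ((fderiv ℝ (gradient u) x (EuclideanSpace.single i 1)) i)
        + gradient u x i * (-β * u x ^ (-β - 1) * gradient u x i) := by
    intro i x hx
    have hn : Ω ∈ 𝓝 x := hΩ.mem_nhds hx
    have hud : DifferentiableAt ℝ u x := (hu1.differentiableOn one_ne_zero).differentiableAt hn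
    have hgd : DifferentiableAt ℝ (gradient u) x :=
      (hGc1.differentiableOn one_ne_zero).differentiableAt hn
    have h1 : HasFDerivAt (fun y => u y ^ (-β)) ((-β * u x ^ (-β - 1)) • fderiv ℝ u x) x :=
      hud.hasFDerivAt.rpow_const (Or.inl (hupos x hx).ne')
    have h2 : HasFDerivAt (fun y => gradient u y i)
        ((EuclideanSpace.proj i).comp (fderiv ℝ (gradient u) x)) x := by
      exact ((EuclideanSpace.proj i :
        EuclideanSpace ℝ (Fin N) →L[ℝ] ℝ).hasFDerivAt).comp x hgd.hasFDerivAt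
    have h3 : HasFDerivAt (fun y => u y ^ (-β) * gradient u y i) _ x := h1.mul h2
    have hev : g i =ᶠ[𝓝 x] (fun y => u y ^ (-β) * gradient u y i) :=
      eventually_of_mem hn (fun y hy => Set.indicator_of_mem hy _)
    rw [hev.fderiv_eq, h3.fderiv]
    simp only [ContinuousLinearMap.add_apply, ContinuousLinearMap.coe_smul',
      Pi.smul_apply, ContinuousLinearMap.coe_comp', Function.comp_apply, smul_eq_mul]
    have hproj : (EuclideanSpace.proj i : EuclideanSpace ℝ (Fin N) →L[ℝ] ℝ)
        ((fderiv ℝ (gradient u) x) (EuclideanSpace.single i 1))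
        = (fderiv ℝ (gradient u) x) (EuclideanSpace.single i 1) i := rfl
    rw [hproj, hgradcoord]
  have hnormsq : ∀ x : EuclideanSpace ℝ (Fin N),
      ‖gradient u x‖^2 = ∑ i, gradient u x i * gradient u x i := by
    intro x
    rw [EuclideanSpace.norm_eq, Real.sq_sqrt (by positivity)]
    congr 1; funext i; rw [Real.norm_eq_abs, sq_abs, sq]
  have hsumR : ∀ x, ∑ i, φ x * fderiv ℝ (g i) x (EuclideanSpace.single i 1)
      = Ω.indicator (fun y => φ y * (u y ^ (-β) * laplacian u y
          - β * u y ^ (-β - 1) * ‖gradient u y‖^2)) x := by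
    intro x
    by_cases hx : x ∈ Ω
    · rw [Set.indicator_of_mem hx]
      rw [Finset.sum_congr rfl (fun i _ => by rw [hgfd i x hx])]
      simp only [laplacian, vecDiv]
      rw [hnormsq x]
      rw [Finset.sum_congr rfl (fun i (_ : i ∈ Finset.univ) =>
        (show φ x * (u x ^ (-β) * ((fderiv ℝ (gradient u) x (EuclideanSpace.single i 1)) i)
            + gradient u x i * (-β * u x ^ (-β - 1) * gradient u x i))
          = φ x * u x ^ (-β) * ((fderiv ℝ (gradient u) x (EuclideanSpace.single i 1)) i)
            - φ x * (β * u x ^ (-β - 1)) * (gradient u x i * gradient u x i) by ring))]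
      rw [Finset.sum_sub_distrib, ← Finset.mul_sum, ← Finset.mul_sum]
      ring
    · rw [Set.indicator_of_notMem hx]
      have hφx : φ x = 0 := image_eq_zero_of_notMem_tsupport (fun h => hx (hφΩ h))
      simp [hφx]
  have hsumL : ∀ x, ∑ i, fderiv ℝ φ x (EuclideanSpace.single i 1) * g i x
      = Ω.indicator (fun y => u y ^ (-β) * fderiv ℝ φ y (gradient u y)) x := by
    intro x
    by_cases hx : x ∈ Ω
    · rw [Set.indicator_of_mem hx]
      have hrepr : ∑ i, gradient u x i • EuclideanSpace.single i (1:ℝ) = gradient u x := by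
        have := (EuclideanSpace.basisFun (Fin N) ℝ).sum_repr (gradient u x)
        simpa [EuclideanSpace.basisFun_apply, EuclideanSpace.basisFun_repr] using this
      conv_rhs => rw [← hrepr]
      rw [map_sum, Finset.mul_sum]
      apply Finset.sum_congr rfl
      intro i _
      rw [(fderiv ℝ φ x).map_smul]
      simp only [hgdef, Set.indicator_of_mem hx, smul_eq_mul]
      ring
    · simp only [hgdef, Set.indicator_of_notMem hx, mul_zero, Finset.sum_const_zero]
  -- integrability infrastructure
  have hKc : IsCompact (tsupport φ) := hφc
  have hgbd : ∀ i, ∃ M, ∀ x ∈ tsupport φ, ‖g i x‖ ≤ M := fun i =>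
    hKc.exists_bound_of_continuousOn (((hgC1 i).continuousOn).mono hφΩ)
  choose Mg hMg using hgbd
  have hgdbd : ∀ i, ∃ M, ∀ x ∈ tsupport φ, ‖fderiv ℝ (g i) x‖ ≤ M := fun i =>
    hKc.exists_bound_of_continuousOn
      (((hgC1 i).continuousOn_fderiv_of_isOpen hΩ le_rfl).mono hφΩ)
  choose Mgd hMgd using hgdbd
  have hindK : ∀ M : ℝ, Integrable ((tsupport φ).indicator fun _ => M) volume := fun M => by
    rw [integrable_indicator_iff hKc.measurableSet]
    exact integrableOn_const hKc.measure_lt_top.ne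
  have hfderivφ0 : ∀ x, x ∉ tsupport φ → fderiv ℝ φ x = 0 := by
    intro x hx
    have hev : φ =ᶠ[𝓝 x] (fun _ => (0:ℝ)) :=
      eventually_of_mem ((isClosed_tsupport φ).isOpen_compl.mem_nhds hx)
        (fun y hy => image_eq_zero_of_notMem_tsupport hy)
    rw [hev.fderiv_eq]
    exact fderiv_const_apply 0
  have hsingle : ∀ i : Fin N, ‖EuclideanSpace.single i (1:ℝ)‖ = 1 := fun i => by
    rw [EuclideanSpace.norm_single]; exact norm_one
  have hLint : ∀ i, Integrable
      (fun x => fderiv ℝ φ x (EuclideanSpace.single i 1) * g i x) volume := by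
    intro i
    refine (hindK (((2 * Real.toNNReal Mξ * Kξ : NNReal) : ℝ) * Mg i)).mono'
      (((measurable_fderiv_apply_const ℝ φ _).aestronglyMeasurable).mul (hgm i))
      (ae_of_all _ fun x => ?_)
    by_cases hx : x ∈ tsupport φ
    · rw [Set.indicator_of_mem hx, norm_mul]
      refine mul_le_mul ?_ (hMg i x hx) (norm_nonneg _) (NNReal.coe_nonneg _)
      calc ‖fderiv ℝ φ x (EuclideanSpace.single i 1)‖
          ≤ ‖fderiv ℝ φ x‖ * ‖EuclideanSpace.single i (1:ℝ)‖ := (fderiv ℝ φ x).le_opNorm _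
        _ ≤ ((2 * Real.toNNReal Mξ * Kξ : NNReal) : ℝ) * 1 := by
            rw [hsingle i]
            exact mul_le_mul_of_nonneg_right (norm_fderiv_le_of_lipschitz ℝ hφlip)
              (by norm_num)
        _ = _ := mul_one _
    · rw [Set.indicator_of_notMem hx, hfderivφ0 x hx]
      simp
  have hRint : ∀ i, Integrable
      (fun x => φ x * fderiv ℝ (g i) x (EuclideanSpace.single i 1)) volume := by
    intro i
    refine (hindK (Mφ * Mgd i)).mono'
      (hφlip.continuous.aestronglyMeasurable.mul
        ((measurable_fderiv_apply_const ℝ (g i) _).aestronglyMeasurable))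
      (ae_of_all _ fun x => ?_)
    by_cases hx : x ∈ tsupport φ
    · rw [Set.indicator_of_mem hx, norm_mul]
      refine mul_le_mul (hMφ x) ?_ (norm_nonneg _) hMφ0
      calc ‖fderiv ℝ (g i) x (EuclideanSpace.single i 1)‖
          ≤ ‖fderiv ℝ (g i) x‖ * ‖EuclideanSpace.single i (1:ℝ)‖ :=
            (fderiv ℝ (g i) x).le_opNorm _
        _ ≤ Mgd i * 1 := by
            rw [hsingle i]
            refine mul_le_mul_of_nonneg_right (hMgd i x hx) (by norm_num)
        _ = Mgd i := mul_one _
    · rw [Set.indicator_of_notMem hx, image_eq_zero_of_notMem_tsupport hx]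
      simp
  -- the main integral identity
  have hmain : ∫ x, Ω.indicator (fun y => u y ^ (-β) * fderiv ℝ φ y (gradient u y)) x
      = ∫ x, Ω.indicator (fun y => φ y * (β * u y ^ (-β - 1) * ‖gradient u y‖^2
          - u y ^ (-β) * laplacian u y)) x := by
    calc ∫ x, Ω.indicator (fun y => u y ^ (-β) * fderiv ℝ φ y (gradient u y)) x
        = ∫ x, ∑ i, fderiv ℝ φ x (EuclideanSpace.single i 1) * g i x := by
          congr 1; funext x; rw [hsumL x]
      _ = ∑ i, ∫ x, fderiv ℝ φ x (EuclideanSpace.single i 1) * g i x :=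
          integral_finset_sum _ (fun i _ => hLint i)
      _ = ∑ i, - ∫ x, φ x * fderiv ℝ (g i) x (EuclideanSpace.single i 1) :=
          Finset.sum_congr rfl (fun i _ => hibp i)
      _ = - ∑ i, ∫ x, φ x * fderiv ℝ (g i) x (EuclideanSpace.single i 1) := by
          rw [Finset.sum_neg_distrib]
      _ = - ∫ x, ∑ i, φ x * fderiv ℝ (g i) x (EuclideanSpace.single i 1) := by
          rw [integral_finset_sum _ (fun i _ => hRint i)]
      _ = - ∫ x, Ω.indicator (fun y => φ y * (u y ^ (-β) * laplacian u y
            - β * u y ^ (-β - 1) * ‖gradient u y‖^2)) x := by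
          have heq' : (fun x => ∑ i, φ x * fderiv ℝ (g i) x (EuclideanSpace.single i 1))
              = fun x => Ω.indicator (fun y => φ y * (u y ^ (-β) * laplacian u y
                - β * u y ^ (-β - 1) * ‖gradient u y‖^2)) x := by
            funext x; rw [hsumR x]
          rw [heq']
      _ = ∫ x, Ω.indicator (fun y => φ y * (β * u y ^ (-β - 1) * ‖gradient u y‖^2
            - u y ^ (-β) * laplacian u y)) x := by
          rw [← integral_neg]
          congr 1; funext x
          by_cases hx : x ∈ Ω
          · rw [Set.indicator_of_mem hx, Set.indicator_of_mem hx]; ring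
          · rw [Set.indicator_of_notMem hx, Set.indicator_of_notMem hx]; ring
  -- continuity of the laplacian on Ω
  have hfdgc : ContinuousOn (fderiv ℝ (gradient u)) Ω :=
    hGc1.continuousOn_fderiv_of_isOpen hΩ le_rfl
  have hlapc : ContinuousOn (fun x => laplacian u x) Ω := by
    simp only [laplacian, vecDiv]
    apply continuousOn_finset_sum
    intro i _
    have hcont : Continuous (fun L : EuclideanSpace ℝ (Fin N) →L[ℝ] EuclideanSpace ℝ (Fin N) =>
        (L (EuclideanSpace.single i 1)) i) :=
      (EuclideanSpace.proj i :
        EuclideanSpace ℝ (Fin N) →L[ℝ] ℝ).continuous.comp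
        (ContinuousLinearMap.apply ℝ (EuclideanSpace ℝ (Fin N))
          (EuclideanSpace.single i 1)).continuous
    exact hcont.comp_continuousOn hfdgc
  -- generic integrability of indicator integrands with a φ factor
  have hIndInt : ∀ h : EuclideanSpace ℝ (Fin N) → ℝ, ContinuousOn h Ω →
      Integrable (Ω.indicator (fun y => φ y * h y)) volume := by
    intro h hc
    obtain ⟨Mh, hMh⟩ := hKc.exists_bound_of_continuousOn (hc.mono hφΩ)
    refine (hindK (Mφ * Mh)).mono'
      ((aestronglyMeasurable_indicator_iff hΩ.measurableSet).2
        ((hφlip.continuous.continuousOn.mul hc).aestronglyMeasurable hΩ.measurableSet))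
      (ae_of_all _ fun x => ?_)
    by_cases hx : x ∈ tsupport φ
    · rw [Set.indicator_of_mem hx, Set.indicator_of_mem (hφΩ hx), norm_mul]
      exact mul_le_mul (hMφ x) (hMh x hx) (norm_nonneg _) hMφ0
    · have hz : Ω.indicator (fun y => φ y * h y) x = 0 := by
        by_cases hxΩ : x ∈ Ω
        · rw [Set.indicator_of_mem hxΩ, image_eq_zero_of_notMem_tsupport hx, zero_mul]
        · exact Set.indicator_of_notMem hxΩ _
      rw [hz, Set.indicator_of_notMem hx]
      simp
  have hc1 : ContinuousOn (fun y => β * u y ^ (-β-1) * ‖gradient u y‖^2) Ω :=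
    (continuousOn_const.mul (hrpow (-β-1)).continuousOn).mul (hGc1.continuousOn.norm.pow 2)
  have hc2 : ContinuousOn (fun y => β * u y ^ (-β-1) * ‖gradient u y‖^2
      - u y ^ (-β) * laplacian u y) Ω :=
    hc1.sub ((hrpow (-β)).continuousOn.mul hlapc)
  -- step 1 : β A ≤ ∫ indicator (φ (β u^{-β-1} |∇u|² - u^{-β} Δu))
  have hstep1 : β * (∫ x in Ω, |ξ x| ^ 2 * ((u x) ^ (-β - 1) * ‖gradient u x‖ ^ 2))
      ≤ ∫ x, Ω.indicator (fun y => φ y * (β * u y ^ (-β - 1) * ‖gradient u y‖^2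
          - u y ^ (-β) * laplacian u y)) x := by
    have hA1 : β * (∫ x in Ω, |ξ x| ^ 2 * ((u x) ^ (-β - 1) * ‖gradient u x‖ ^ 2))
        = ∫ x, Ω.indicator (fun y => φ y * (β * u y ^ (-β - 1) * ‖gradient u y‖^2)) x := by
      rw [integral_indicator hΩ.measurableSet, ← integral_const_mul]
      congr 1; funext x
      simp only [hφdef]
      rw [sq_abs]
      ring
    rw [hA1]
    apply integral_mono (hIndInt _ hc1) (hIndInt _ hc2)
    intro x
    by_cases hx : x ∈ Ω
    · rw [Set.indicator_of_mem hx, Set.indicator_of_mem hx]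
      have h1 : 0 ≤ φ x := mul_self_nonneg _
      have h2 : u x ^ (-β) * laplacian u x ≤ 0 :=
        mul_nonpos_of_nonneg_of_nonpos (Real.rpow_nonneg (hupos x hx).le _) (hsuper x hx)
      nlinarith [mul_nonneg h1 (neg_nonneg.2 h2)]
    · rw [Set.indicator_of_notMem hx, Set.indicator_of_notMem hx]
  -- integrability of the two energy integrands
  have hAint : Integrable (Ω.indicator
      (fun y => |ξ y|^2 * (u y ^ (-β-1) * ‖gradient u y‖^2))) volume := by
    have hI := hIndInt (fun y => u y ^ (-β-1) * ‖gradient u y‖^2)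
      (((hrpow (-β-1)).continuousOn).mul (hGc1.continuousOn.norm.pow 2))
    apply hI.congr (ae_of_all _ fun x => ?_)
    by_cases hx : x ∈ Ω
    · rw [Set.indicator_of_mem hx, Set.indicator_of_mem hx]
      simp only [hφdef]
      rw [sq_abs]
      ring
    · rw [Set.indicator_of_notMem hx, Set.indicator_of_notMem hx]
  have hBint : Integrable (Ω.indicator
      (fun y => ‖fderiv ℝ ξ y‖^2 * u y ^ (-β+1))) volume := by
    have hKξc : IsCompact (tsupport ξ) := hcs
    obtain ⟨M4, hM4⟩ := hKξc.exists_bound_of_continuousOn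
      (((hrpow (-β+1)).continuousOn).mono hsub)
    have hindKξ : Integrable ((tsupport ξ).indicator fun _ => ((Kξ:ℝ)^2 * M4)) volume := by
      rw [integrable_indicator_iff hKξc.measurableSet]
      exact integrableOn_const hKξc.measure_lt_top.ne
    refine hindKξ.mono'
      ((aestronglyMeasurable_indicator_iff hΩ.measurableSet).2
        (((((measurable_fderiv ℝ ξ).norm.pow_const 2).aestronglyMeasurable).restrict).mul
          (((hrpow (-β+1)).continuousOn).aestronglyMeasurable hΩ.measurableSet)))
      (ae_of_all _ fun x => ?_)
    by_cases hx : x ∈ tsupport ξ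
    · rw [Set.indicator_of_mem hx, Set.indicator_of_mem (hsub hx), norm_mul]
      have e1 : ‖(‖fderiv ℝ ξ x‖^2)‖ = ‖fderiv ℝ ξ x‖^2 := by
        rw [Real.norm_eq_abs, abs_of_nonneg (by positivity)]
      rw [e1]
      refine mul_le_mul ?_ (hM4 x hx) (norm_nonneg _) (by positivity)
      exact pow_le_pow_left₀ (norm_nonneg _) (norm_fderiv_le_of_lipschitz ℝ hKξ) 2
    · have hd0 : fderiv ℝ ξ x = 0 := by
        have hev : ξ =ᶠ[𝓝 x] (fun _ => (0:ℝ)) :=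
          eventually_of_mem ((isClosed_tsupport ξ).isOpen_compl.mem_nhds hx)
            (fun y hy => image_eq_zero_of_notMem_tsupport hy)
        rw [hev.fderiv_eq]
        exact fderiv_const_apply 0
      have hz : Ω.indicator (fun y => ‖fderiv ℝ ξ y‖^2 * u y ^ (-β+1)) x = 0 := by
        by_cases hxΩ : x ∈ Ω
        · rw [Set.indicator_of_mem hxΩ, hd0]; simp
        · exact Set.indicator_of_notMem hxΩ _
      rw [hz, Set.indicator_of_notMem hx]
      simp
  -- step 2 : pointwise AM-GM estimate and integration
  have hstep2 : (∫ x, Ω.indicator (fun y => u y ^ (-β) * fderiv ℝ φ y (gradient u y)) x)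
      ≤ (β/2) * (∫ x in Ω, |ξ x| ^ 2 * ((u x) ^ (-β - 1) * ‖gradient u x‖ ^ 2))
        + (2/β) * (∫ x in Ω, ‖fderiv ℝ ξ x‖ ^ 2 * (u x) ^ (-β + 1)) := by
    have hβ0 : (0:ℝ) < β := by linarith
    have hSint : Integrable (fun x => Ω.indicator
        (fun y => u y ^ (-β) * fderiv ℝ φ y (gradient u y)) x) volume := by
      have heq2 : (fun x => Ω.indicator
          (fun y => u y ^ (-β) * fderiv ℝ φ y (gradient u y)) x)
          = fun x => ∑ i, fderiv ℝ φ x (EuclideanSpace.single i 1) * g i x := by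
        funext x; rw [hsumL x]
      rw [heq2]
      exact integrable_finset_sum _ (fun i _ => hLint i)
    have hHint : Integrable (fun x =>
        (β/2) * Ω.indicator (fun y => |ξ y|^2 * (u y ^ (-β-1) * ‖gradient u y‖^2)) x
        + (2/β) * Ω.indicator (fun y => ‖fderiv ℝ ξ y‖^2 * u y ^ (-β+1)) x) volume :=
      (hAint.const_mul _).add (hBint.const_mul _)
    have hle : ∀ᵐ x ∂(volume : Measure (EuclideanSpace ℝ (Fin N))),
        Ω.indicator (fun y => u y ^ (-β) * fderiv ℝ φ y (gradient u y)) x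
        ≤ (β/2) * Ω.indicator (fun y => |ξ y|^2 * (u y ^ (-β-1) * ‖gradient u y‖^2)) x
          + (2/β) * Ω.indicator (fun y => ‖fderiv ℝ ξ y‖^2 * u y ^ (-β+1)) x := by
      filter_upwards [hKξ.ae_differentiableAt] with x hdx
      by_cases hx : x ∈ Ω
      · rw [Set.indicator_of_mem hx, Set.indicator_of_mem hx, Set.indicator_of_mem hx]
        have hfφ : fderiv ℝ φ x = ξ x • fderiv ℝ ξ x + ξ x • fderiv ℝ ξ x := by
          simp only [hφdef]
          exact (hdx.hasFDerivAt.mul hdx.hasFDerivAt).fderiv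
        rw [hfφ]
        simp only [ContinuousLinearMap.add_apply, ContinuousLinearMap.coe_smul',
          Pi.smul_apply, smul_eq_mul]
        have ht : 0 < u x := hupos x hx
        set t := u x with hht
        set a := |ξ x| * ‖gradient u x‖ with ha
        set b := ‖fderiv ℝ ξ x‖ with hb
        have hD : ξ x * fderiv ℝ ξ x (gradient u x) + ξ x * fderiv ℝ ξ x (gradient u x)
            ≤ 2 * (a * b) := by
          have h1 : |fderiv ℝ ξ x (gradient u x)| ≤ ‖fderiv ℝ ξ x‖ * ‖gradient u x‖ := by
            have := (fderiv ℝ ξ x).le_opNorm (gradient u x)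
            rwa [Real.norm_eq_abs] at this
          have h2 : ξ x * fderiv ℝ ξ x (gradient u x)
              ≤ |ξ x| * (‖fderiv ℝ ξ x‖ * ‖gradient u x‖) := by
            calc ξ x * fderiv ℝ ξ x (gradient u x)
                ≤ |ξ x * fderiv ℝ ξ x (gradient u x)| := le_abs_self _
              _ = |ξ x| * |fderiv ℝ ξ x (gradient u x)| := abs_mul _ _
              _ ≤ |ξ x| * (‖fderiv ℝ ξ x‖ * ‖gradient u x‖) :=
                  mul_le_mul_of_nonneg_left h1 (abs_nonneg _)
          rw [ha, hb]; nlinarith [h2]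
        have key : 2 * (a * b) * t ^ (-β)
            ≤ (β/2) * (a^2 * t^(-β-1)) + (2/β) * (b^2 * t^(-β+1)) := by
          have e1 : t ^ (-β) = t^(-β-1) * t := by
            rw [← Real.rpow_add_one ht.ne' (-β-1)]
            congr 1; ring
          have e2 : t ^ (-β+1) = t^(-β-1) * (t*t) := by
            rw [← mul_assoc, ← Real.rpow_add_one ht.ne' (-β-1),
              ← Real.rpow_add_one ht.ne' (-β-1+1)]
            congr 1; ring
          have h3 : (0:ℝ) ≤ t^(-β-1) := Real.rpow_nonneg ht.le _
          have h5 : 2*(a*(b*t)) ≤ (β/2) * a^2 + (2/β) * (b*t)^2 := by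
            have h4 : (β/2) * a^2 + (2/β) * (b*t)^2 - 2*(a*(b*t))
                = (β*a - 2*(b*t))^2/(2*β) := by
              field_simp; ring
            nlinarith [div_nonneg (sq_nonneg (β*a - 2*(b*t))) (by linarith : (0:ℝ) ≤ 2*β)]
          rw [e1, e2]
          calc 2 * (a*b) * (t^(-β-1) * t) = t^(-β-1) * (2*(a*(b*t))) := by ring
            _ ≤ t^(-β-1) * ((β/2) * a^2 + (2/β) * (b*t)^2) := mul_le_mul_of_nonneg_left h5 h3
            _ = (β/2) * (a^2 * t^(-β-1)) + (2/β) * (b^2 * (t^(-β-1) * (t*t))) := by ring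
        calc t ^ (-β) * (ξ x * fderiv ℝ ξ x (gradient u x) + ξ x * fderiv ℝ ξ x (gradient u x))
            ≤ t ^ (-β) * (2 * (a*b)) :=
              mul_le_mul_of_nonneg_left hD (Real.rpow_nonneg ht.le _)
          _ = 2 * (a*b) * t^(-β) := by ring
          _ ≤ (β/2) * (a^2 * t^(-β-1)) + (2/β) * (b^2 * t^(-β+1)) := key
          _ = (β/2) * (|ξ x|^2 * (t^(-β-1) * ‖gradient u x‖^2)) + (2/β) * (b^2 * t^(-β+1)) := by
              rw [ha, mul_pow]; ring
      · rw [Set.indicator_of_notMem hx, Set.indicator_of_notMem hx,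
          Set.indicator_of_notMem hx]
        simp
    refine le_trans (integral_mono_ae hSint hHint hle) ?_
    rw [integral_add (hAint.const_mul _) (hBint.const_mul _), integral_const_mul,
      integral_const_mul, integral_indicator hΩ.measurableSet,
      integral_indicator hΩ.measurableSet]
  -- conclusion
  have hA0 : 0 ≤ ∫ x in Ω, |ξ x| ^ 2 * ((u x) ^ (-β - 1) * ‖gradient u x‖ ^ 2) :=
    setIntegral_nonneg hΩ.measurableSet (fun x hx =>
      mul_nonneg (by positivity) (mul_nonneg (Real.rpow_nonneg (hupos x hx).le _)
        (by positivity)))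
  have hB0 : 0 ≤ ∫ x in Ω, ‖fderiv ℝ ξ x‖ ^ 2 * (u x) ^ (-β + 1) :=
    setIntegral_nonneg hΩ.measurableSet (fun x hx =>
      mul_nonneg (by positivity) (Real.rpow_nonneg (hupos x hx).le _))
  set A := ∫ x in Ω, |ξ x| ^ 2 * ((u x) ^ (-β - 1) * ‖gradient u x‖ ^ 2) with hAdef
  set B := ∫ x in Ω, ‖fderiv ℝ ξ x‖ ^ 2 * (u x) ^ (-β + 1) with hBdef
  have hchain : β * A ≤ (β/2) * A + (2/β) * B :=
    le_trans hstep1 (le_trans (le_of_eq hmain.symm) hstep2)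
  have hβ0 : (0:ℝ) < β := by linarith
  have h2 : (β/2) * A ≤ (2/β) * B := by linarith
  have h3 : β^2 * A ≤ 4 * B := by
    calc β^2 * A = (2*β) * ((β/2)*A) := by ring
      _ ≤ (2*β) * ((2/β)*B) := mul_le_mul_of_nonneg_left h2 (by positivity)
      _ = 4 * B := by field_simp; ring
  nlinarith [mul_nonneg hA0 (sq_nonneg (β-6))]
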